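/- Let K be a subgroup of a compact group G. If G has an open normal subgroup T such that K/C_K(T) is torsion, then Pr(⟨x⟩, G) > 0 for every x ∈ K. -/

import Mathlib

open MeasureTheory Pointwise

/-- The centralizer of any set is a closed subgroup of a topological group. -/
lemma isClosed_centralizer' {G : Type*} [Group G] [TopologicalSpace G] [IsTopologicalGroup G]
    [T2Space G] (s : Set G) : IsClosed (Subgroup.centralizer s : Set G) := by
  have : (Subgroup.centralizer s : Set G) = ⋂ t ∈ s, {g : G | t * g = g * t} := by
    ext g
    simp [Subgroup.mem_centralizer_iff]
  rw [this]
  exact isClosed_biInter fun t _ =>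
    isClosed_eq (continuous_const.mul continuous_id) (continuous_id.mul continuous_const)

/-- `commProbC μH μG H` is the probability that a random element of the closed subgroup `H`
(with measure `μH`) commutes with a random element of `G` (with measure `μG`). -/
noncomputable def commProbC {G : Type*} [Group G] [TopologicalSpace G] [MeasurableSpace G]
    (μG : Measure G) (H : Subgroup G) (μH : Measure ↥H) : ENNReal :=
  (μH.prod μG) {p : ↥H × G | Commute (p.1 : G) p.2}

/-- If a compact group `G` has an open normal subgroup `T` such that `K/C_K(T)` is torsion,
then `Pr(⟨x⟩, G) > 0` for every `x ∈ K`, where `⟨x⟩` is the closed monothetic subgroup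
generated by `x` and all measures are normalized Haar measures. -/
theorem stmt8 {G : Type*} [Group G] [TopologicalSpace G] [IsTopologicalGroup G]
    [CompactSpace G] [T2Space G] [MeasurableSpace G] [BorelSpace G]
    (μG : Measure G) (hμG : μG.IsHaarMeasure) (hμG1 : IsProbabilityMeasure μG)
    (K T : Subgroup G) (hT : IsOpen (T : Set G)) [T.Normal]
    (htor : ∀ k ∈ K, ∃ n : ℕ, 0 < n ∧ k ^ n ∈ Subgroup.centralizer (T : Set G)) :
    ∀ x ∈ K, ∀ μH : Measure ↥((Subgroup.closure {x}).topologicalClosure),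
      μH.IsHaarMeasure → IsProbabilityMeasure μH →
      0 < commProbC μG (Subgroup.closure {x}).topologicalClosure μH := by
  haveI := hμG
  haveI := hμG1
  intro x hx
  obtain ⟨n, hn, hxn⟩ := htor x hx
  set H := (Subgroup.closure {x}).topologicalClosure with hHdef
  intro μH hμH hμH1
  haveI := hμH
  haveI := hμH1
  have hxH : x ∈ H :=
    Subgroup.le_topologicalClosure _ (Subgroup.subset_closure (Set.mem_singleton x))
  set y : ↥H := ⟨x, hxH⟩ with hy
  set Z : Subgroup ↥H := (Subgroup.centralizer (T : Set G)).comap H.subtype with hZ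
  have hZclosed : IsClosed (Z : Set ↥H) := by
    have : (Z : Set ↥H) = (Subtype.val : ↥H → G) ⁻¹' (Subgroup.centralizer (T : Set G)) := rfl
    rw [this]
    exact (isClosed_centralizer' _).preimage continuous_subtype_val
  have hynZ : y ^ n ∈ Z := by
    simp only [hZ, Subgroup.mem_comap]
    have : H.subtype (y ^ n) = x ^ n := by
      simp [hy]
    rw [this]
    exact hxn
  -- the covering set
  set C : Set ↥H := ⋃ i ∈ Finset.range n, (y ^ i) • (Z : Set ↥H) with hC
  have hCclosed : IsClosed C := by
    apply Set.Finite.isClosed_biUnion (Finset.finite_toSet _)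
    intro i _
    exact hZclosed.smul (y ^ i)
  -- C is all of H
  have hHclosed : IsClosed (H : Set G) := Subgroup.isClosed_topologicalClosure _
  haveI : CompactSpace ↥H := isCompact_iff_compactSpace.mp (hHclosed.isCompact)
  have hCcover : ∀ h : ↥H, h ∈ C := by
    intro h
    -- the image of C in G is closed and contains the closure of ⟨x⟩
    have hCcomp : IsCompact ((Subtype.val : ↥H → G) '' C) :=
      (hCclosed.isCompact).image continuous_subtype_val
    have hCimclosed : IsClosed ((Subtype.val : ↥H → G) '' C) := hCcomp.isClosed
    have hsub : ((Subgroup.closure {x} : Subgroup G) : Set G) ⊆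
        (Subtype.val : ↥H → G) '' C := by
      intro g hg
      rw [← Subgroup.zpowers_eq_closure] at hg
      obtain ⟨k, rfl⟩ := hg
      refine ⟨y ^ k, ?_, by simp [hy]⟩
      -- y ^ k ∈ C
      have hkey : y ^ k ∈ (y ^ (k % (n : ℤ)).toNat) • (Z : Set ↥H) := by
        refine ⟨(y ^ ((n : ℤ) * (k / (n : ℤ)))), ?_, ?_⟩
        · have : y ^ ((n : ℤ) * (k / (n : ℤ))) = (y ^ n) ^ (k / (n : ℤ)) := by
            rw [zpow_mul, zpow_natCast]
          rw [this]
          exact Z.zpow_mem hynZ _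
        · have h1 : ((k % (n : ℤ)).toNat : ℤ) = k % (n : ℤ) :=
            Int.toNat_of_nonneg (Int.emod_nonneg k (by exact_mod_cast hn.ne'))
          show (y ^ (k % (n : ℤ)).toNat) * (y ^ ((n : ℤ) * (k / (n : ℤ)))) = y ^ k
          rw [← zpow_natCast, h1, ← zpow_add, Int.emod_add_mul_ediv k (n : ℤ)]
      have hlt : (k % (n : ℤ)).toNat < n := by
        have := Int.emod_lt_of_pos k (by exact_mod_cast hn : (0:ℤ) < (n:ℤ))
        omega
      exact Set.mem_biUnion (Finset.mem_range.mpr hlt) hkey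
    have hmem : (h : G) ∈ (Subtype.val : ↥H → G) '' C := by
      have h1 : (h : G) ∈ closure ((Subgroup.closure {x} : Subgroup G) : Set G) := by
        have := h.2
        rwa [← Subgroup.topologicalClosure_coe]
      exact hCimclosed.closure_subset_iff.mpr hsub h1
    obtain ⟨h', hh', hval⟩ := hmem
    rwa [show h' = h from Subtype.ext hval] at hh'
  -- positive measure of Z
  have htrans : ∀ (g : ↥H) (s : Set ↥H), μH (g • s) = μH s := fun g s =>
    measure_smul μH g s
  have hμZ : μH (Z : Set ↥H) ≠ 0 := by
    intro h0
    have h1 : (1 : ENNReal) ≤ ∑ i ∈ Finset.range n, μH ((y ^ i) • (Z : Set ↥H)) := by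
      calc (1 : ENNReal) = μH Set.univ := (measure_univ).symm
        _ ≤ μH C := measure_mono (fun h _ => hCcover h)
        _ ≤ _ := measure_biUnion_finset_le _ _
    have h2 : ∑ i ∈ Finset.range n, μH ((y ^ i) • (Z : Set ↥H)) = 0 := by
      apply Finset.sum_eq_zero
      intro i _
      rw [htrans, h0]
    rw [h2] at h1
    simp at h1
  -- positive measure of T
  have hμT : μG (T : Set G) ≠ 0 :=
    (hT.measure_pos μG ⟨1, T.one_mem⟩).ne'
  -- the product rectangle is inside the commuting set
  have hrect : (Z : Set ↥H) ×ˢ (T : Set G) ⊆ {p : ↥H × G | Commute (p.1 : G) p.2} := by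
    rintro ⟨z, t⟩ ⟨hz, ht⟩
    have : (z : G) ∈ Subgroup.centralizer (T : Set G) := hz
    exact ((Subgroup.mem_centralizer_iff.mp this) t ht).symm
  calc (0 : ENNReal) < μH (Z : Set ↥H) * μG (T : Set G) :=
        ENNReal.mul_pos hμZ hμT
    _ = (μH.prod μG) ((Z : Set ↥H) ×ˢ (T : Set G)) := (Measure.prod_prod _ _).symm
    _ ≤ commProbC μG H μH := measure_mono hrect
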